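/- If X is a first-countable subspace of a countably compact Hausdorff space, then X is a regular topological space. -/

import Mathlib

open Filter Topology

/-- In a T1 space, every neighborhood of an accumulation point of a set
meets that set in an infinite set. -/
lemma accPt_infinite_nhds {Y : Type*} [TopologicalSpace Y] [T1Space Y]
    {y : Y} {A : Set Y} (h : AccPt y (𝓟 A)) {W : Set Y} (hW : W ∈ 𝓝 y) :
    (W ∩ A).Infinite := by
  intro hfin
  have hW' : W \ ((W ∩ A) \ {y}) ∈ 𝓝 y := by
    have hcl : IsClosed ((W ∩ A) \ {y}) := (Set.Finite.diff hfin : ((W ∩ A) \ {y}).Finite).isClosed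
    have : ((W ∩ A) \ {y})ᶜ ∈ 𝓝 y :=
      hcl.isOpen_compl.mem_nhds (by simp)
    exact Filter.inter_mem hW this
  obtain ⟨z, hz, hzy⟩ := accPt_iff_nhds.1 h _ hW'
  exact hz.1.2 ⟨⟨hz.1.1, hz.2⟩, hzy⟩

/-- If `X` is a first-countable subspace of a countably compact Hausdorff
space, then `X` is regular. -/
theorem stmt1 {Y : Type*} [TopologicalSpace Y] [T2Space Y]
    (hcc : ∀ S : Set Y, S.Infinite → ∃ y : Y, AccPt y (𝓟 S))
    (s : Set Y) [FirstCountableTopology s] :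
    RegularSpace s := by
  apply RegularSpace.of_exists_mem_nhds_isClosed_subset
  intro x U hU
  obtain ⟨V, hV⟩ := (𝓝 x).exists_antitone_basis
  by_contra hcon
  push_neg at hcon
  have hxU : x ∈ U := mem_of_mem_nhds hU
  -- for each n, the closure of V n is not contained in U
  have hbad : ∀ n, ¬ closure (V n) ⊆ U := by
    intro n hsub
    exact hcon (closure (V n))
      (mem_of_superset (hV.mem n) subset_closure) isClosed_closure hsub
  choose p hp hpU using fun n => Set.not_subset.1 (hbad n)
  -- all p n are in the closure of every V m (for m ≤ n)
  have hpcl : ∀ {m n : ℕ}, m ≤ n → p n ∈ closure (V m) := fun {m n} hmn =>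
    closure_mono (hV.antitone hmn) (hp n)
  -- any point in all closures equals x (Hausdorffness of the subspace)
  have hall : ∀ z : s, (∀ n, z ∈ closure (V n)) → z = x := by
    intro z hz
    by_contra hne
    obtain ⟨O, W, hO, hWo, hxO, hzW, hdisj⟩ := t2_separation (Ne.symm hne)
    obtain ⟨n, hn⟩ := hV.toHasBasis.mem_iff.1 (hO.mem_nhds hxO)
    have h1 : z ∈ closure O := closure_mono hn.2 (hz n)
    obtain ⟨w, hw1, hw2⟩ := mem_closure_iff.1 h1 W hWo hzW
    exact Set.disjoint_left.1 hdisj hw2 hw1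
  -- the image of the p's in Y
  set A : Set Y := Set.range fun n => (p n : Y) with hA
  have hAinf : A.Infinite := by
    intro hfin
    have : Finite A := hfin.to_subtype
    obtain ⟨z, hzfib⟩ :=
      Finite.exists_infinite_fiber (fun n : ℕ => (⟨↑(p n), ⟨n, rfl⟩⟩ : A))
    obtain ⟨k0, hk0⟩ := z.2
    have hzall : ∀ n, p k0 ∈ closure (V n) := by
      intro n
      have : {k | (↑(p k) : Y) = ↑z}.Infinite := by
        have := Set.infinite_coe_iff.1 hzfib
        have hsub : (fun k => (⟨↑(p k), ⟨k, rfl⟩⟩ : A)) ⁻¹' {z} ⊆ {k | (↑(p k) : Y) = ↑z} := by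
          intro k hk
          simpa [Subtype.ext_iff] using hk
        exact Set.Infinite.mono hsub this
      obtain ⟨m, hm, hmn⟩ := this.exists_gt n
      have hpm : (↑(p m) : Y) = ↑(p k0) := hm.trans hk0.symm
      have : p m = p k0 := Subtype.ext hpm
      exact this ▸ hpcl hmn.le
    have := hall (p k0) hzall
    exact hpU k0 (this ▸ hxU)
  obtain ⟨y, hy⟩ := hcc A hAinf
  -- y is in the closure (in Y) of the image of every V n
  have hycl : ∀ n, y ∈ closure (Subtype.val '' V n) := by
    intro n
    rw [mem_closure_iff]
    intro W hWo hyW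
    have hinf := accPt_infinite_nhds hy (hWo.mem_nhds hyW)
    have hidx : {k | (↑(p k) : Y) ∈ W}.Infinite := by
      intro hfin
      apply hinf
      have : W ∩ A ⊆ (fun k => (↑(p k) : Y)) '' {k | (↑(p k) : Y) ∈ W} := by
        rintro w ⟨hw1, k, rfl⟩
        exact ⟨k, hw1, rfl⟩
      exact Set.Finite.subset (hfin.image _) this
    obtain ⟨m, hm, hmn⟩ := hidx.exists_gt n
    have hclY : (↑(p m) : Y) ∈ closure (Subtype.val '' V n) :=
      image_closure_subset_closure_image continuous_subtype_val
        ⟨p m, hpcl hmn.le, rfl⟩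
    obtain ⟨w, hw1, hw2⟩ := mem_closure_iff.1 hclY W hWo hm
    exact ⟨w, hw1, hw2⟩
  -- y ≠ ↑x
  have hyne : y ≠ (x : Y) := by
    intro heq
    obtain ⟨O, hOmem, hOsub⟩ := mem_comap.1 (nhds_induced (Subtype.val : s → Y) x ▸ hU)
    have := accPt_infinite_nhds hy (heq ▸ hOmem)
    obtain ⟨w, ⟨hw1, k, rfl⟩⟩ := this.nonempty
    exact hpU k (hOsub hw1)
  -- separate y and ↑x in Y
  obtain ⟨G, H, hGo, hHo, hxG, hyH, hdisj⟩ := t2_separation (Ne.symm hyne)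
  have hGmem : (Subtype.val : s → Y) ⁻¹' G ∈ 𝓝 x := by
    rw [nhds_induced]
    exact preimage_mem_comap (hGo.mem_nhds hxG)
  obtain ⟨n, -, hn⟩ := hV.toHasBasis.mem_iff.1 hGmem
  have hyG : y ∈ closure G :=
    closure_mono (Set.image_subset_iff.2 hn) (hycl n)
  obtain ⟨w, hw1, hw2⟩ := mem_closure_iff.1 hyG H hHo hyH
  exact Set.disjoint_left.1 hdisj hw2 hw1
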